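/- If a connected graph G has a bridge (cut-edge) uv, then the line generated by u and v in the graph metric is universal. -/

import Mathlib

/-- The line generated by `a` and `b` in the shortest-path metric of `G`:
`{a, b}` together with all vertices collinear with `a` and `b`. -/
def graphLine {V : Type*} (G : SimpleGraph V) (a b : V) : Set V :=
  {a, b} ∪ {c | G.dist a c + G.dist c b = G.dist a b ∨
                G.dist c a + G.dist a b = G.dist c b ∨
                G.dist a b + G.dist b c = G.dist a c}

private lemma reach_or_reach {V : Type*} (G : SimpleGraph V) (hconn : G.Connected)
    (u v w : V) :
    (G \ SimpleGraph.fromEdgeSet {s(u, v)}).Reachable u w ∨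
    (G \ SimpleGraph.fromEdgeSet {s(u, v)}).Reachable v w := by
  set G' := G \ SimpleGraph.fromEdgeSet {s(u, v)} with hG'
  obtain ⟨p⟩ := hconn u w
  suffices h : ∀ {x y : V} (_ : G.Walk x y),
      (G'.Reachable u x ∨ G'.Reachable v x) → (G'.Reachable u y ∨ G'.Reachable v y) from
    h p (Or.inl (SimpleGraph.Reachable.refl u))
  intro x y p hx
  induction p with
  | nil => exact hx
  | @cons a b c hab q ih =>
    apply ih
    by_cases he : s(a, b) = s(u, v)
    · obtain ⟨rfl, rfl⟩ | ⟨rfl, rfl⟩ := Sym2.eq_iff.mp he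
      · exact Or.inr (SimpleGraph.Reachable.refl _)
      · exact Or.inl (SimpleGraph.Reachable.refl _)
    · have hadj : G'.Adj a b := by
        rw [hG']
        simp only [SimpleGraph.sdiff_adj, SimpleGraph.fromEdgeSet_adj, Set.mem_singleton_iff]
        exact ⟨hab, fun h => he h.1⟩
      rcases hx with hx | hx
      · exact Or.inl (hx.trans hadj.reachable)
      · exact Or.inr (hx.trans hadj.reachable)

private lemma bridge_dist_succ {V : Type*} (G : SimpleGraph V) (hconn : G.Connected)
    {u v : V} (hbridge : G.IsBridge s(u, v)) {w : V}
    (hr : (G \ SimpleGraph.fromEdgeSet {s(u, v)}).Reachable u w) :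
    G.dist u w + 1 = G.dist v w := by
  classical
  set G' := G \ SimpleGraph.fromEdgeSet {s(u, v)} with hG'
  obtain ⟨hadj, hnr⟩ : G.Adj u v ∧ _ :=
    ⟨hbridge.reachable_iff_adj.mp (hconn u v), (SimpleGraph.isBridge_iff).mp hbridge⟩
  have hd1 : G.dist u v = 1 := SimpleGraph.dist_eq_one_iff_adj.mpr hadj
  -- every walk from v to w in G passes through u
  have hmem : ∀ p : G.Walk v w, u ∈ p.support := by
    intro p
    by_contra hu
    have hne : s(u, v) ∉ p.edges := fun h => hu (p.fst_mem_support_of_mem_edges h)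
    have : G'.Reachable v w := by
      refine ⟨p.transfer G' fun e ep => ?_⟩
      simp only [hG', SimpleGraph.edgeSet_sdiff, SimpleGraph.edgeSet_fromEdgeSet,
        SimpleGraph.edgeSet_sdiff_sdiff_isDiag, Set.mem_diff, Set.mem_singleton_iff]
      exact ⟨p.edges_subset_edgeSet ep, fun h' => hne (h' ▸ ep)⟩
    exact hnr (hr.trans this.symm)
  obtain ⟨p, hp⟩ := hconn.exists_walk_length_eq_dist v w
  have husup := hmem p
  have hsplit := p.take_spec husup
  have hlen : (p.takeUntil u husup).length + (p.dropUntil u husup).length = p.length := by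
    rw [← SimpleGraph.Walk.length_append, hsplit]
  have h1 : G.dist v u ≤ (p.takeUntil u husup).length := G.dist_le _
  have h2 : G.dist u w ≤ (p.dropUntil u husup).length := G.dist_le _
  have hvu : G.dist v u = 1 := by rw [SimpleGraph.dist_comm]; exact hd1
  have htri : G.dist v w ≤ G.dist v u + G.dist u w := hconn.dist_triangle
  omega

theorem bridge_line_universal {V : Type*} (G : SimpleGraph V)
    (hconn : G.Connected) (u v : V) (hbridge : G.IsBridge s(u, v)) :
    graphLine G u v = Set.univ := by
  ext w
  simp only [graphLine, Set.mem_union, Set.mem_setOf_eq, Set.mem_univ, iff_true]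
  rcases reach_or_reach G hconn u v w with hr | hr
  · have := bridge_dist_succ G hconn hbridge hr
    have hd1 : G.dist u v = 1 := SimpleGraph.dist_eq_one_iff_adj.mpr (hbridge.reachable_iff_adj.mp (hconn u v))
    refine Or.inr (Or.inr (Or.inl ?_))
    rw [SimpleGraph.dist_comm (u := w) (v := u), SimpleGraph.dist_comm (u := w) (v := v)]
    omega
  · have hbridge' : G.IsBridge s(v, u) := by rwa [Sym2.eq_swap]
    have hr' : (G \ SimpleGraph.fromEdgeSet {s(v, u)}).Reachable v w := by
      rwa [Sym2.eq_swap]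
    have := bridge_dist_succ G hconn hbridge' hr'
    have hd1 : G.dist u v = 1 := SimpleGraph.dist_eq_one_iff_adj.mpr (hbridge.reachable_iff_adj.mp (hconn u v))
    refine Or.inr (Or.inr (Or.inr ?_))
    omega
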